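/- The function r ↦ log(U(r)), where U is the normalized sigmoidal utility function, is strictly concave on (0, ∞). -/

import Mathlib

private lemma strictConcaveOn_congr' {s : Set ℝ} {f g : ℝ → ℝ}
    (h : StrictConcaveOn ℝ s g) (he : ∀ x ∈ s, f x = g x) : StrictConcaveOn ℝ s f := by
  refine ⟨h.1, fun x hx y hy hxy p q hp hq hpq => ?_⟩
  rw [he x hx, he y hy, he _ (h.1 hx hy hp.le hq.le hpq)]
  exact h.2 hx hy hxy hp hq hpq

private lemma aux_strictConcave (a K : ℝ) (ha : 0 < a) (hK : 0 < K) :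
    StrictConcaveOn ℝ (Set.Ioi (0 : ℝ))
      (fun r => Real.log (1 - Real.exp (-a * r)) - Real.log (1 + K * Real.exp (-a * r))) := by
  set h : ℝ → ℝ := fun r => Real.log (1 - Real.exp (-a * r)) - Real.log (1 + K * Real.exp (-a * r))
    with hh
  set h₁ : ℝ → ℝ := fun r =>
      a * Real.exp (-a * r) / (1 - Real.exp (-a * r))
        + a * K * Real.exp (-a * r) / (1 + K * Real.exp (-a * r)) with hh₁
  have hE : ∀ x : ℝ, 0 < x → Real.exp (-a * x) < 1 := by
    intro x hx
    rw [Real.exp_lt_one_iff]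
    nlinarith
  have hden1 : ∀ x : ℝ, 0 < x → 0 < 1 - Real.exp (-a * x) := fun x hx => by
    have := hE x hx; linarith
  have hden2 : ∀ x : ℝ, (0:ℝ) < 1 + K * Real.exp (-a * x) := fun x => by
    have := Real.exp_pos (-a * x); nlinarith
  have hde : ∀ x : ℝ, HasDerivAt (fun r => Real.exp (-a * r)) (Real.exp (-a * x) * -a) x :=
    fun x => by simpa using ((hasDerivAt_id x).const_mul (-a)).exp
  have hderiv : ∀ x : ℝ, 0 < x → HasDerivAt h (h₁ x) x := by
    intro x hx
    have d1 : HasDerivAt (fun r => Real.log (1 - Real.exp (-a * r)))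
        ((0 - Real.exp (-a * x) * -a) / (1 - Real.exp (-a * x))) x :=
      ((hasDerivAt_const x (1:ℝ)).sub (hde x)).log (hden1 x hx).ne'
    have d2 : HasDerivAt (fun r => Real.log (1 + K * Real.exp (-a * r)))
        ((0 + K * (Real.exp (-a * x) * -a)) / (1 + K * Real.exp (-a * x))) x :=
      ((hasDerivAt_const x (1:ℝ)).add ((hde x).const_mul K)).log (hden2 x).ne'
    have := d1.sub d2
    refine this.congr_deriv ?_
    rw [hh₁]
    field_simp
    ring
  have hderiv_eq : ∀ x ∈ Set.Ioi (0:ℝ), deriv h x = h₁ x := fun x hx =>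
    (hderiv x hx).deriv
  apply strictConcaveOn_of_deriv2_neg (convex_Ioi 0)
  · -- continuity
    refine ContinuousOn.sub (ContinuousOn.log ?_ fun x hx => (hden1 x hx).ne')
      (ContinuousOn.log ?_ fun x _ => (hden2 x).ne')
    · exact (continuous_const.sub (Real.continuous_exp.comp (continuous_const.mul continuous_id))).continuousOn
    · exact (continuous_const.add (continuous_const.mul (Real.continuous_exp.comp (continuous_const.mul continuous_id)))).continuousOn
  · intro x hx
    rw [interior_Ioi] at hx
    have hx' : (0:ℝ) < x := hx
    -- deriv^[2] h x = deriv (deriv h) x = deriv h₁ x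
    have hev : deriv h =ᶠ[nhds x] h₁ :=
      Filter.eventuallyEq_of_mem (Ioi_mem_nhds hx') hderiv_eq
    have key : deriv^[2] h x = deriv h₁ x := by
      simp only [Function.iterate_succ, Function.iterate_zero, Function.comp_apply, id]
      exact hev.deriv_eq
    rw [key]
    -- compute deriv h₁ x
    set E := Real.exp (-a * x) with hE'
    have hEpos : 0 < E := Real.exp_pos _
    have hE1 : E < 1 := hE x hx'
    have hv1 : (1:ℝ) - E ≠ 0 := (hden1 x hx').ne'
    have hv2 : (1:ℝ) + K * E ≠ 0 := (hden2 x).ne'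
    have t1 : HasDerivAt (fun r => a * Real.exp (-a * r) / (1 - Real.exp (-a * r)))
        ((a * (E * -a) * (1 - E) - a * E * (0 - E * -a)) / (1 - E) ^ 2) x :=
      ((hde x).const_mul a).div ((hasDerivAt_const x (1:ℝ)).sub (hde x)) hv1
    have t2 : HasDerivAt (fun r => a * K * Real.exp (-a * r) / (1 + K * Real.exp (-a * r)))
        ((a * K * (E * -a) * (1 + K * E) - a * K * E * (0 + K * (E * -a))) / (1 + K * E) ^ 2) x :=
      ((hde x).const_mul (a * K)).div ((hasDerivAt_const x (1:ℝ)).add ((hde x).const_mul K)) hv2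
    have hd : HasDerivAt h₁
        ((a * (E * -a) * (1 - E) - a * E * (0 - E * -a)) / (1 - E) ^ 2
          + (a * K * (E * -a) * (1 + K * E) - a * K * E * (0 + K * (E * -a))) / (1 + K * E) ^ 2)
        x := t1.add t2
    rw [hd.deriv]
    have n1 : (a * (E * -a) * (1 - E) - a * E * (0 - E * -a)) / (1 - E) ^ 2
        = -(a ^ 2 * E) / (1 - E) ^ 2 := by ring
    have n2 : (a * K * (E * -a) * (1 + K * E) - a * K * E * (0 + K * (E * -a))) / (1 + K * E) ^ 2
        = -(a ^ 2 * K * E) / (1 + K * E) ^ 2 := by ring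
    rw [n1, n2]
    have p1 : -(a ^ 2 * E) / (1 - E) ^ 2 < 0 := by
      apply div_neg_of_neg_of_pos
      · have : 0 < a ^ 2 * E := by positivity
        linarith
      · positivity
    have p2 : -(a ^ 2 * K * E) / (1 + K * E) ^ 2 < 0 := by
      apply div_neg_of_neg_of_pos
      · have : 0 < a ^ 2 * K * E := by positivity
        linarith
      · positivity
    linarith

theorem log_sigmoid_utility_strictConcave (a b : ℝ) (ha : 0 < a) (hb : 0 < b)
    (c d : ℝ) (U : ℝ → ℝ)
    (hc : c = (1 + Real.exp (a * b)) / Real.exp (a * b))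
    (hd : d = 1 / (1 + Real.exp (a * b)))
    (hU : ∀ r, U r = c * (1 / (1 + Real.exp (-a * (r - b))) - d))
    (hUpos : ∀ r ∈ Set.Ioi (0 : ℝ), 0 < U r) :
    StrictConcaveOn ℝ (Set.Ioi (0 : ℝ)) (fun r => Real.log (U r)) := by
  set K := Real.exp (a * b) with hK
  have hKpos : 0 < K := Real.exp_pos _
  apply strictConcaveOn_congr' (aux_strictConcave a K ha hKpos)
  intro x hx
  have hx' : (0:ℝ) < x := hx
  have hEpos : 0 < Real.exp (-a * x) := Real.exp_pos _
  have hE1 : Real.exp (-a * x) < 1 := by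
    rw [Real.exp_lt_one_iff]; nlinarith
  have hsplit : Real.exp (-a * (x - b)) = K * Real.exp (-a * x) := by
    rw [hK, ← Real.exp_add]; ring_nf
  have hden2 : (0:ℝ) < 1 + K * Real.exp (-a * x) := by nlinarith
  have hUval : U x = (1 - Real.exp (-a * x)) / (1 + K * Real.exp (-a * x)) := by
    rw [hU, hsplit, hc, hd]
    have h1 : (0:ℝ) < 1 + K := by linarith
    field_simp
    ring
  rw [hUval, Real.log_div (by linarith) hden2.ne']
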